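/- The only rational point (X, Y) ∈ ℚ² on the genus 2 curve Y² = (3X²+4)(X³+X) is (0, 0). -/

import Mathlib

/-- Rational points on V² = U³ + U satisfy U = 0 (rank 0, torsion {O,(0,0)}). -/
lemma aux_cn1 (U V : ℚ) (h : V ^ 2 = U ^ 3 + U) : U = 0 := by
  by_contra hU
  have hV : V ≠ 0 := by
    intro hV0
    apply hU
    have : U * (U ^ 2 + 1) = 0 := by rw [hV0] at h; linarith [h]
    rcases mul_eq_zero.1 this with h1 | h1
    · exact h1
    · nlinarith [sq_nonneg U]
  set p : ℤ := U.num with hp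
  set q : ℤ := (U.den : ℤ) with hq
  have hq0 : 0 < q := Int.natCast_pos.2 U.pos
  have hp0 : p ≠ 0 := Rat.num_ne_zero.2 hU
  have hpq : IsCoprime p q := by
    rw [Int.isCoprime_iff_gcd_eq_one]
    exact U.reduced
  have hUpq : (p : ℚ) = U * q := by
    rw [hp, hq]; push_cast; exact (Rat.mul_den_eq_num U).symm
  -- w := V * q² is an integer
  have key : (V * (q : ℚ) ^ 2) ^ 2 = ((p * q * (p ^ 2 + q ^ 2) : ℤ) : ℚ) := by
    push_cast
    rw [hUpq]
    linear_combination ((q : ℚ)) ^ 4 * h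
  have hden : (V * (q : ℚ) ^ 2).den = 1 := by
    have h2 : ((V * (q : ℚ) ^ 2) ^ 2).den = 1 := by
      rw [key]; exact Rat.den_intCast _
    rw [Rat.den_pow, pow_two] at h2
    exact Nat.eq_one_of_mul_eq_one_right h2
  obtain ⟨w, hw⟩ : ∃ w : ℤ, (w : ℚ) = V * (q : ℚ) ^ 2 :=
    ⟨(V * (q : ℚ) ^ 2).num, Rat.coe_int_num_of_den_eq_one hden⟩
  have hwZ : w ^ 2 = p * q * (p ^ 2 + q ^ 2) := by
    have : ((w ^ 2 : ℤ) : ℚ) = ((p * q * (p ^ 2 + q ^ 2) : ℤ) : ℚ) := by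
      push_cast [hw]; push_cast at key; linarith [key]
    exact_mod_cast this
  have hw0 : w ≠ 0 := by
    intro h0
    apply hV
    have : (V : ℚ) * (q : ℚ) ^ 2 = 0 := by rw [← hw, h0]; norm_num
    rcases mul_eq_zero.1 this with h1 | h1
    · exact h1
    · exact absurd h1 (by positivity)
  -- coprimality facts
  have hpc : IsCoprime p (p ^ 2 + q ^ 2) := by
    have h2 : p ^ 2 + q ^ 2 = q ^ 2 + p * p := by ring
    rw [h2]
    exact (hpq.pow_right (n := 2)).add_mul_left_right p
  have hqc : IsCoprime q (p ^ 2 + q ^ 2) := by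
    have h2 : p ^ 2 + q ^ 2 = p ^ 2 + q * q := by ring
    rw [h2]
    exact ((hpq.symm).pow_right (n := 2)).add_mul_left_right q
  -- p > 0
  have hppos : 0 < p := by
    rcases lt_or_gt_of_ne hp0 with hneg | hpos
    · exfalso
      have hs : 0 < p ^ 2 + q ^ 2 := by positivity
      have hneg2 : p * (q * (p ^ 2 + q ^ 2)) < 0 :=
        mul_neg_of_neg_of_pos hneg (mul_pos hq0 hs)
      nlinarith [sq_nonneg w]
    · exact hpos
  have hsum : 0 < p ^ 2 + q ^ 2 := by positivity
  obtain ⟨a, ha⟩ := Int.sq_of_isCoprime (hpq.mul_right hpc) (by linarith [hwZ] : p * (q * (p ^ 2 + q ^ 2)) = w ^ 2)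
  obtain ⟨b, hb⟩ := Int.sq_of_isCoprime (hpq.symm.mul_right hqc) (by linarith [hwZ] : q * (p * (p ^ 2 + q ^ 2)) = w ^ 2)
  obtain ⟨c, hc⟩ := Int.sq_of_isCoprime (hpc.symm.mul_right hqc.symm) (by linarith [hwZ] : (p ^ 2 + q ^ 2) * (p * q) = w ^ 2)
  have ha' : p = a ^ 2 := ha.resolve_right (by intro h'; nlinarith [sq_nonneg a])
  have hb' : q = b ^ 2 := hb.resolve_right (by intro h'; nlinarith [sq_nonneg b])
  have hc' : p ^ 2 + q ^ 2 = c ^ 2 := hc.resolve_right (by intro h'; nlinarith [sq_nonneg c])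
  have ha0 : a ≠ 0 := by intro h'; rw [h'] at ha'; simp at ha'; omega
  have hb0 : b ≠ 0 := by intro h'; rw [h'] at hb'; simp at hb'; omega
  exact not_fermat_42 ha0 hb0 (by rw [← hc', ha', hb']; ring)

theorem stmt_14 (X Y : ℚ) :
    Y ^ 2 = (3 * X ^ 2 + 4) * (X ^ 3 + X) ↔ X = 0 ∧ Y = 0 := by
  constructor
  · intro h
    have hD : (3 * X ^ 2 + 4 : ℚ) ≠ 0 := by positivity
    have hV2 : (X * Y * (X ^ 2 + 4) / (3 * X ^ 2 + 4) ^ 2) ^ 2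
        = (X ^ 3 / (3 * X ^ 2 + 4)) ^ 3 + X ^ 3 / (3 * X ^ 2 + 4) := by
      field_simp
      linear_combination X ^ 2 * (X ^ 2 + 4) ^ 2 * h
    have hU := aux_cn1 _ _ hV2
    have hX : X = 0 := by
      field_simp at hU
      simpa using hU
    refine ⟨hX, ?_⟩
    rw [hX] at h
    simpa using h
  · rintro ⟨hX, hY⟩
    rw [hX, hY]; ring
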